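/- Let u, v be unitary operators on H with u − 1 and v − 1 compact. Then: (a) the family ((u p_i u* − v p_i v*) p_i)_{i≥0} (where the index i = 0 uses p_0) is summable in the operator norm of B(H); and (b) if C ≥ 0 is such that ‖u·P(u*·y) − v·P(v*·y)‖ ≤ C for every compact y with ‖y‖ ≤ 1, then ‖Σ_{i≥0} (u p_i u* − v p_i v*) p_i‖ ≤ 3C. -/

import Mathlib

set_option maxHeartbeats 1600000
set_option linter.unusedSectionVars false
set_option linter.unusedVariables false

/-- The pinching operator associated with a family of mutually orthogonal projections. -/
noncomputable def pinch {H : Type*} [NormedAddCommGroup H] [InnerProductSpace ℂ H]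
    (p : ℕ → H →L[ℂ] H) (x : H →L[ℂ] H) : H →L[ℂ] H :=
  ∑' i, p i * x * p i

/-- The family `{p_i}_{i ≥ 0}` obtained by adjoining the complementary projection `p₀`. -/
def extFam {H : Type*} [NormedAddCommGroup H] [InnerProductSpace ℂ H]
    (p0 : H →L[ℂ] H) (p : ℕ → H →L[ℂ] H) : ℕ → H →L[ℂ] H
  | 0 => p0
  | n + 1 => p n

section pinchingHelpers

variable {H : Type*} [NormedAddCommGroup H] [InnerProductSpace ℂ H] [CompleteSpace H]

local notation "⟪" x ", " y "⟫" => @inner ℂ _ _ x y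

private lemma sa_inner_move (T : H →L[ℂ] H) (h : IsSelfAdjoint T) (x y : H) :
    ⟪T x, y⟫ = ⟪x, T y⟫ := by
  have hadj : ContinuousLinearMap.adjoint T = T := by
    rw [← ContinuousLinearMap.star_eq_adjoint]; exact h
  conv_lhs => rw [← hadj]
  exact ContinuousLinearMap.adjoint_inner_left T y x

private lemma sa_idem_contraction (T : H →L[ℂ] H) (hsa : IsSelfAdjoint T) (hid : T * T = T)
    (ξ : H) : ‖T ξ‖ ≤ ‖ξ‖ := by
  rcases eq_or_lt_of_le (norm_nonneg (T ξ)) with h0 | h0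
  · rw [← h0]; exact norm_nonneg ξ
  have key : ‖T ξ‖ ^ 2 = RCLike.re ⟪ξ, T ξ⟫ := by
    rw [← inner_self_eq_norm_sq (𝕜 := ℂ)]
    congr 1
    rw [sa_inner_move T hsa ξ (T ξ)]
    have h3 : T (T ξ) = (T * T) ξ := rfl
    rw [h3, hid]
  have h2 : ‖T ξ‖ ^ 2 ≤ ‖ξ‖ * ‖T ξ‖ := by
    rw [key]
    calc RCLike.re ⟪ξ, T ξ⟫ ≤ ‖(⟪ξ, T ξ⟫ : ℂ)‖ := RCLike.re_le_norm _
      _ ≤ ‖ξ‖ * ‖T ξ‖ := norm_inner_le_norm _ _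
  nlinarith [h2]

private lemma norm_sum_sq_orth {ι : Type*} (s : Finset ι) (w : ι → H)
    (horth : ∀ i ∈ s, ∀ j ∈ s, i ≠ j → ⟪w i, w j⟫ = 0) :
    ‖∑ i ∈ s, w i‖ ^ 2 = ∑ i ∈ s, ‖w i‖ ^ 2 := by
  have key : RCLike.re ⟪∑ i ∈ s, w i, ∑ j ∈ s, w j⟫ = ∑ i ∈ s, RCLike.re ⟪w i, w i⟫ := by
    rw [sum_inner, map_sum]
    refine Finset.sum_congr rfl (fun i hi => ?_)
    rw [inner_sum, Finset.sum_eq_single i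
      (fun j hj hne => by rw [horth i hi j hj (Ne.symm hne)])
      (fun h => (h hi).elim)]
  rw [← inner_self_eq_norm_sq (𝕜 := ℂ), key]
  exact Finset.sum_congr rfl (fun i _ => inner_self_eq_norm_sq (𝕜 := ℂ) _)

/-- A family of mutually orthogonal self-adjoint idempotents. -/
def FamOrtho (q : ℕ → H →L[ℂ] H) : Prop :=
  (∀ i, IsSelfAdjoint (q i)) ∧ (∀ i, q i * q i = q i) ∧ (∀ i j, i ≠ j → q i * q j = 0)

private lemma fam_sum_sa (q : ℕ → H →L[ℂ] H) (hq : FamOrtho q) (s : Finset ℕ) :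
    IsSelfAdjoint (∑ i ∈ s, q i) := by
  unfold IsSelfAdjoint
  rw [star_sum]
  exact Finset.sum_congr rfl (fun i _ => hq.1 i)

private lemma fam_sum_idem (q : ℕ → H →L[ℂ] H) (hq : FamOrtho q) (s : Finset ℕ) :
    (∑ i ∈ s, q i) * (∑ j ∈ s, q j) = ∑ i ∈ s, q i := by
  rw [Finset.sum_mul_sum]
  refine Finset.sum_congr rfl (fun i hi => ?_)
  rw [Finset.sum_eq_single i (fun j hj hne => hq.2.2 i j (Ne.symm hne)) (fun h => (h hi).elim)]
  exact hq.2.1 i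

private lemma fam_img_orth (q : ℕ → H →L[ℂ] H) (hq : FamOrtho q) (x y : H) {i j : ℕ}
    (hij : i ≠ j) : ⟪q i x, q j y⟫ = 0 := by
  rw [sa_inner_move _ (hq.1 i) x (q j y)]
  have h1 : q i (q j y) = (q i * q j) y := rfl
  rw [h1, hq.2.2 i j hij]
  simp

private lemma fam_sum_contraction (q : ℕ → H →L[ℂ] H) (hq : FamOrtho q) (s : Finset ℕ)
    (ξ : H) : ‖∑ i ∈ s, q i ξ‖ ≤ ‖ξ‖ := by
  have h1 : ∑ i ∈ s, q i ξ = (∑ i ∈ s, q i) ξ := by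
    rw [ContinuousLinearMap.sum_apply]
  rw [h1]
  exact sa_idem_contraction _ (fam_sum_sa q hq s) (fam_sum_idem q hq s) ξ

private lemma fam_norm_sum_sq (q : ℕ → H →L[ℂ] H) (hq : FamOrtho q) (s : Finset ℕ) (ξ : H) :
    ‖∑ i ∈ s, q i ξ‖ ^ 2 = ∑ i ∈ s, ‖q i ξ‖ ^ 2 :=
  norm_sum_sq_orth s (fun i => q i ξ)
    (fun i _ j _ hij => fam_img_orth q hq ξ ξ hij)

private lemma fam_bessel (q : ℕ → H →L[ℂ] H) (hq : FamOrtho q) (s : Finset ℕ) (ξ : H) :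
    ∑ i ∈ s, ‖q i ξ‖ ^ 2 ≤ ‖ξ‖ ^ 2 := by
  rw [← fam_norm_sum_sq q hq]
  have := fam_sum_contraction q hq s ξ
  nlinarith [norm_nonneg (∑ i ∈ s, q i ξ), norm_nonneg ξ]

private lemma fam_sq_summable (q : ℕ → H →L[ℂ] H) (hq : FamOrtho q) (ξ : H) :
    Summable (fun i => ‖q i ξ‖ ^ 2) :=
  summable_of_sum_le (fun i => sq_nonneg _) (fun s => fam_bessel q hq s ξ)

/-- Tails of the family annihilate a fixed compact operator. -/
private lemma fam_tail_small (q : ℕ → H →L[ℂ] H) (hq : FamOrtho q) (c : H →L[ℂ] H)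
    (hc : IsCompactOperator ⇑c) {ε : ℝ} (hε : 0 < ε) :
    ∃ s : Finset ℕ, ∀ t : Finset ℕ, Disjoint t s → ∀ ξ : H,
      ‖∑ i ∈ t, q i (c ξ)‖ ≤ ε * ‖ξ‖ := by
  have hK : IsCompact (closure (⇑c '' Metric.closedBall 0 1)) :=
    hc.isCompact_closure_image_closedBall (𝕜₁ := ℂ) (f := (c : H →ₛₗ[RingHom.id ℂ] H)) 1
  obtain ⟨net, hnetfin, hcover⟩ :=
    Metric.totallyBounded_iff.mp hK.totallyBounded (ε/2) (by linarith)
  have hchoice : ∀ η : H, ∃ s : Finset ℕ, ∀ t : Finset ℕ, Disjoint t s →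
      ∑ i ∈ t, ‖q i η‖ ^ 2 < (ε/2) ^ 2 := by
    intro η
    have hsum := fam_sq_summable q hq η
    have hnb : Set.Iio ((ε/2)^2) ∈ nhds (0:ℝ) := Iio_mem_nhds (by positivity)
    obtain ⟨s, hs⟩ := hsum.vanishing hnb
    exact ⟨s, fun t ht => hs t ht⟩
  choose sel hsel using hchoice
  haveI := hnetfin.fintype
  refine ⟨hnetfin.toFinset.biUnion sel, fun t ht ξ => ?_⟩
  have main : ∀ w : H, ‖w‖ ≤ 1 → ‖∑ i ∈ t, q i (c w)‖ ≤ ε := by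
    intro w hw
    have hmem : c w ∈ closure (⇑c '' Metric.closedBall 0 1) :=
      subset_closure ⟨w, by simpa [Metric.mem_closedBall, dist_eq_norm] using hw, rfl⟩
    obtain ⟨η, hηnet, hηdist⟩ := Set.mem_iUnion₂.mp (hcover hmem)
    have hdist : ‖c w - η‖ < ε/2 := by
      rw [← dist_eq_norm]; exact Metric.mem_ball.mp hηdist
    have hsplit : ∑ i ∈ t, q i (c w) = (∑ i ∈ t, q i (c w - η)) + ∑ i ∈ t, q i η := by
      rw [← Finset.sum_add_distrib]
      refine Finset.sum_congr rfl (fun i _ => ?_)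
      rw [← map_add]; congr 1; abel
    rw [hsplit]
    have h1 : ‖∑ i ∈ t, q i (c w - η)‖ ≤ ‖c w - η‖ := fam_sum_contraction q hq t _
    have h2 : ‖∑ i ∈ t, q i η‖ ≤ ε/2 := by
      have ht' : Disjoint t (sel η) := by
        refine Finset.disjoint_left.mpr (fun a hat hasel => ?_)
        exact (Finset.disjoint_left.mp ht) hat
          (Finset.mem_biUnion.mpr ⟨η, hnetfin.mem_toFinset.mpr hηnet, hasel⟩)
      have hlt := hsel η t ht'
      have hsq : ‖∑ i ∈ t, q i η‖ ^ 2 < (ε/2)^2 := by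
        rw [fam_norm_sum_sq q hq]; exact hlt
      nlinarith [norm_nonneg (∑ i ∈ t, q i η)]
    calc ‖(∑ i ∈ t, q i (c w - η)) + ∑ i ∈ t, q i η‖
        ≤ ‖∑ i ∈ t, q i (c w - η)‖ + ‖∑ i ∈ t, q i η‖ := norm_add_le _ _
      _ ≤ ε/2 + ε/2 := add_le_add (le_trans h1 (le_of_lt hdist)) h2
      _ = ε := by ring
  rcases eq_or_ne ξ 0 with rfl | hξ0
  · simp
  · have hpos : 0 < ‖ξ‖ := norm_pos_iff.mpr hξ0
    set r : ℂ := ((‖ξ‖⁻¹ : ℝ) : ℂ) with hr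
    have hrn : ‖r‖ = ‖ξ‖⁻¹ := by
      rw [hr, Complex.norm_real, norm_inv, norm_norm]
    have hunit : ‖r • ξ‖ ≤ 1 := by
      rw [norm_smul, hrn, inv_mul_cancel₀ (ne_of_gt hpos)]
    have hb := main (r • ξ) hunit
    have hlin : ∑ i ∈ t, q i (c (r • ξ)) = r • ∑ i ∈ t, q i (c ξ) := by
      rw [Finset.smul_sum]
      refine Finset.sum_congr rfl (fun i _ => ?_)
      rw [map_smul, map_smul]
    rw [hlin, norm_smul, hrn] at hb
    calc ‖∑ i ∈ t, q i (c ξ)‖ = ‖ξ‖ * (‖ξ‖⁻¹ * ‖∑ i ∈ t, q i (c ξ)‖) := by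
          field_simp
      _ ≤ ‖ξ‖ * ε := mul_le_mul_of_nonneg_left hb (norm_nonneg ξ)
      _ = ε * ‖ξ‖ := by ring

/-- Finite pinching is contractive. -/
private lemma fam_pinch_contr (q : ℕ → H →L[ℂ] H) (hq : FamOrtho q) (X : H →L[ℂ] H)
    (t : Finset ℕ) : ‖∑ i ∈ t, q i * X * q i‖ ≤ ‖X‖ := by
  refine ContinuousLinearMap.opNorm_le_bound _ (norm_nonneg X) (fun ξ => ?_)
  rw [ContinuousLinearMap.sum_apply]
  have heq : ∀ i, (q i * X * q i) ξ = q i (X (q i ξ)) := fun i => rfl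
  have hsq : ‖∑ i ∈ t, (q i * X * q i) ξ‖ ^ 2 = ∑ i ∈ t, ‖q i (X (q i ξ))‖ ^ 2 := by
    simp_rw [heq]
    exact norm_sum_sq_orth t _ (fun i _ j _ hij => fam_img_orth q hq _ _ hij)
  have hterm : ∀ i ∈ t, ‖q i (X (q i ξ))‖ ^ 2 ≤ ‖X‖ ^ 2 * ‖q i ξ‖ ^ 2 := by
    intro i _
    have h1 : ‖q i (X (q i ξ))‖ ≤ ‖X (q i ξ)‖ :=
      sa_idem_contraction _ (hq.1 i) (hq.2.1 i) _
    have h2 : ‖X (q i ξ)‖ ≤ ‖X‖ * ‖q i ξ‖ := ContinuousLinearMap.le_opNorm _ _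
    nlinarith [norm_nonneg (q i (X (q i ξ))), norm_nonneg (X (q i ξ)),
      norm_nonneg (q i ξ), norm_nonneg X]
  have hbess := fam_bessel q hq t ξ
  have hsum : ∑ i ∈ t, ‖q i (X (q i ξ))‖ ^ 2 ≤ ‖X‖ ^ 2 * ‖ξ‖ ^ 2 := by
    calc ∑ i ∈ t, ‖q i (X (q i ξ))‖ ^ 2 ≤ ∑ i ∈ t, ‖X‖ ^ 2 * ‖q i ξ‖ ^ 2 :=
          Finset.sum_le_sum hterm
      _ = ‖X‖ ^ 2 * ∑ i ∈ t, ‖q i ξ‖ ^ 2 := by rw [Finset.mul_sum]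
      _ ≤ ‖X‖ ^ 2 * ‖ξ‖ ^ 2 := by
          apply mul_le_mul_of_nonneg_left hbess (sq_nonneg _)
  have := hsq ▸ hsum
  nlinarith [norm_nonneg (∑ i ∈ t, (q i * X * q i) ξ), norm_nonneg ξ, norm_nonneg X,
    mul_nonneg (norm_nonneg X) (norm_nonneg ξ)]

private lemma finrank_proj_compact (U : Submodule ℂ H) [FiniteDimensional ℂ U] :
    IsCompactOperator ⇑(U.subtypeL ∘L (U.orthogonalProjectionOnto)) := by
  rw [isCompactOperator_iff_exists_mem_nhds_image_subset_compact]
  refine ⟨Metric.ball 0 1, Metric.ball_mem_nhds 0 one_pos, ?_⟩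
  refine ⟨Subtype.val '' (Metric.closedBall (0 : U) 1),
    (isCompact_closedBall (0:U) 1).image continuous_subtype_val, ?_⟩
  rintro x ⟨w, hw, rfl⟩
  refine ⟨U.orthogonalProjectionOnto w, ?_, rfl⟩
  rw [Metric.mem_closedBall, dist_zero_right]
  calc ‖U.orthogonalProjectionOnto w‖ ≤ ‖(U.orthogonalProjectionOnto : H →L[ℂ] U)‖ * ‖w‖ :=
        ContinuousLinearMap.le_opNorm _ _
    _ ≤ 1 * 1 := by
        apply mul_le_mul (Submodule.orthogonalProjectionOnto_norm_le U) _ (norm_nonneg _) zero_le_one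
        exact le_of_lt (by simpa [Metric.mem_ball, dist_zero_right] using hw)
    _ = 1 := by ring

private lemma isometry_of_star_mul_self (g : H →L[ℂ] H) (hg : star g * g = 1) (x : H) :
    ‖g x‖ = ‖x‖ := by
  have h1 : ⟪g x, g x⟫ = ⟪x, x⟫ := by
    have h2 : ⟪(ContinuousLinearMap.adjoint g) (g x), x⟫ = ⟪g x, g x⟫ :=
      ContinuousLinearMap.adjoint_inner_left g x (g x)
    have h3 : (ContinuousLinearMap.adjoint g) (g x) = (star g * g) x := by
      rw [ContinuousLinearMap.star_eq_adjoint]; rfl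
    rw [h3, hg] at h2
    simpa using h2.symm
  have := congrArg RCLike.re h1
  rw [inner_self_eq_norm_sq (𝕜 := ℂ), inner_self_eq_norm_sq (𝕜 := ℂ)] at this
  nlinarith [norm_nonneg (g x), norm_nonneg x]

/-- The fundamental "budget" estimate extracted from the hypothesis on the pinching map. -/
private lemma budget (p : ℕ → H →L[ℂ] H) (hp : FamOrtho p)
    (u v g : H →L[ℂ] H) (hg : star g * g = 1)
    (C : ℝ) (hC : 0 ≤ C)
    (hbound : ∀ y : H →L[ℂ] H, IsCompactOperator ⇑y → ‖y‖ ≤ 1 →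
      ‖u * pinch p (star u * y) - v * pinch p (star v * y)‖ ≤ C)
    (s : Finset ℕ) :
    ‖∑ i ∈ s, (u * p i * star u - v * p i * star v) * (g * p i * star g)‖ ≤ C := by
  classical
  have hgiso := isometry_of_star_mul_self g hg
  have hgnorm : ‖g‖ ≤ 1 := ContinuousLinearMap.opNorm_le_bound g zero_le_one
    (fun x => by rw [hgiso, one_mul])
  have hgstar : ∀ x : H, ‖(star g) x‖ ≤ ‖x‖ := by
    intro x
    calc ‖(star g) x‖ ≤ ‖star g‖ * ‖x‖ := ContinuousLinearMap.le_opNorm _ _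
      _ ≤ 1 * ‖x‖ := by
          apply mul_le_mul_of_nonneg_right _ (norm_nonneg x)
          rw [norm_star]; exact hgnorm
      _ = ‖x‖ := one_mul _
  refine ContinuousLinearMap.opNorm_le_bound _ hC (fun ζ => ?_)
  set gs := star g with hgs
  set η : H := ∑ i ∈ s, p i (gs ζ) with hη
  set U : Submodule ℂ H := Submodule.span ℂ ((s.image (fun i => p i (gs ζ))) : Set H) with hU
  haveI : FiniteDimensional ℂ U := FiniteDimensional.span_finset ℂ _
  set R : H →L[ℂ] H := U.subtypeL ∘L (U.orthogonalProjectionOnto) with hRdef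
  set y : H →L[ℂ] H := g * R with hy
  have hgen : ∀ i ∈ s, p i (gs ζ) ∈ U := fun i hi =>
    Submodule.subset_span (Finset.mem_coe.mpr (Finset.mem_image_of_mem _ hi))
  have hRfix : ∀ i ∈ s, R (p i (gs ζ)) = p i (gs ζ) := by
    intro i hi
    exact Submodule.starProjection_eq_self_iff.mpr (hgen i hi)
  have hRperp : ∀ i ∉ s, ∀ x : H, R (p i x) = 0 := by
    intro i his x
    have hmem : p i x ∈ Uᗮ := by
      rw [Submodule.mem_orthogonal]
      intro w hw
      induction hw using Submodule.span_induction with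
      | mem w hw =>
          obtain ⟨j, hj, rfl⟩ := Finset.mem_image.mp (Finset.mem_coe.mp hw)
          exact fam_img_orth p hp _ _ (fun he => his (he ▸ hj))
      | zero => simp
      | add a b _ _ ha hb => rw [inner_add_left, ha, hb, add_zero]
      | smul c a _ ha => rw [inner_smul_left, ha, mul_zero]
    have h0 : U.orthogonalProjectionOnto (p i x) = 0 :=
      Submodule.orthogonalProjectionOnto_apply_of_mem_orthogonal hmem
    show (U.subtypeL ∘L (U.orthogonalProjectionOnto)) (p i x) = 0
    rw [ContinuousLinearMap.comp_apply, h0]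
    rfl
  have hRopi : ∀ i ∉ s, R * p i = 0 := by
    intro i his
    ext x
    exact hRperp i his x
  have hynorm : ‖y‖ ≤ 1 := by
    refine ContinuousLinearMap.opNorm_le_bound _ zero_le_one (fun x => ?_)
    rw [one_mul]
    show ‖g (R x)‖ ≤ ‖x‖
    rw [hgiso]
    calc ‖R x‖ = ‖(U.orthogonalProjectionOnto x : H)‖ := rfl
      _ = ‖U.orthogonalProjectionOnto x‖ := by rw [Submodule.norm_coe]
      _ ≤ ‖(U.orthogonalProjectionOnto : H →L[ℂ] U)‖ * ‖x‖ := ContinuousLinearMap.le_opNorm _ _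
      _ ≤ 1 * ‖x‖ := mul_le_mul_of_nonneg_right (Submodule.orthogonalProjectionOnto_norm_le U) (norm_nonneg x)
      _ = ‖x‖ := one_mul _
  have hycompact : IsCompactOperator ⇑y := by
    have := (finrank_proj_compact U).continuous_comp g.continuous
    exact this
  have hpinch : ∀ w : H →L[ℂ] H,
      pinch p (star w * y) = ∑ i ∈ s, p i * (star w * y) * p i := by
    intro w
    refine tsum_eq_sum (fun i his => ?_)
    have heq : p i * (star w * y) * p i = (p i * (star w * g)) * (R * p i) := by
      rw [hy]; simp only [mul_assoc]
    rw [heq, hRopi i his, mul_zero]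
  have hpη : ∀ i ∈ s, p i η = p i (gs ζ) := by
    intro i hi
    rw [hη, map_sum]
    rw [Finset.sum_eq_single i (fun j hj hne => by
      have h1 : p i (p j (gs ζ)) = (p i * p j) (gs ζ) := rfl
      rw [h1, hp.2.2 i j (Ne.symm hne)]; rfl) (fun h => (h hi).elim)]
    have h2 : p i (p i (gs ζ)) = (p i * p i) (gs ζ) := rfl
    rw [h2, hp.2.1 i]
  have hηnorm : ‖η‖ ≤ ‖ζ‖ := le_trans (fam_sum_contraction p hp s (gs ζ)) (hgstar ζ)
  have heval : (u * pinch p (star u * y) - v * pinch p (star v * y)) η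
      = ∑ i ∈ s, ((u * p i * star u - v * p i * star v) * (g * p i * star g)) ζ := by
    rw [ContinuousLinearMap.sub_apply, ContinuousLinearMap.mul_apply,
      ContinuousLinearMap.mul_apply, hpinch u, hpinch v,
      ContinuousLinearMap.sum_apply, ContinuousLinearMap.sum_apply, map_sum, map_sum,
      ← Finset.sum_sub_distrib]
    refine Finset.sum_congr rfl (fun i hi => ?_)
    have hyi : y (p i (gs ζ)) = g (p i (gs ζ)) := by
      show g (R (p i (gs ζ))) = g (p i (gs ζ))
      rw [hRfix i hi]
    simp only [ContinuousLinearMap.mul_apply, ContinuousLinearMap.sub_apply]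
    rw [hpη i hi, hyi]
  have hb := hbound y hycompact hynorm
  calc ‖(∑ i ∈ s, (u * p i * star u - v * p i * star v) * (g * p i * star g)) ζ‖
      = ‖(u * pinch p (star u * y) - v * pinch p (star v * y)) η‖ := by
        rw [heval, ContinuousLinearMap.sum_apply]
    _ ≤ ‖u * pinch p (star u * y) - v * pinch p (star v * y)‖ * ‖η‖ :=
        ContinuousLinearMap.le_opNorm _ _
    _ ≤ C * ‖ζ‖ := mul_le_mul hb hηnorm (norm_nonneg η) hC

end pinchingHelpers

/-- For unitaries `u, v` with `u - 1, v - 1` compact: (a) the family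
`((u p_i u* - v p_i v*) p_i)_{i ≥ 0}` (including the index `0` block `p₀`) is summable in
operator norm; and (b) if `C ≥ 0` bounds `‖u * P (u* y) - v * P (v* y)‖` over compact `y` with
`‖y‖ ≤ 1`, then `‖∑_{i ≥ 0} (u p_i u* - v p_i v*) p_i‖ ≤ 3C`. -/
theorem pinching_orbit_diagonal_sum_estimate
    {H : Type*} [NormedAddCommGroup H] [InnerProductSpace ℂ H] [CompleteSpace H]
    [TopologicalSpace.SeparableSpace H]
    (hinf : ¬ FiniteDimensional ℂ H)
    (p : ℕ → H →L[ℂ] H)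
    (hsa : ∀ i, IsSelfAdjoint (p i))
    (hidem : ∀ i, p i * p i = p i)
    (horth : ∀ i j, i ≠ j → p i * p j = 0)
    (p0 : H →L[ℂ] H) (hp0sa : IsSelfAdjoint p0) (hp0idem : p0 * p0 = p0)
    (hp0fix : ∀ ξ : H, p0 ξ = ξ ↔ ∀ i, p i ξ = 0)
    (u v : H →L[ℂ] H)
    (hu1 : star u * u = 1) (hu2 : u * star u = 1) (hucpt : IsCompactOperator ⇑(u - 1))
    (hv1 : star v * v = 1) (hv2 : v * star v = 1) (hvcpt : IsCompactOperator ⇑(v - 1))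
    (C : ℝ) (hC : 0 ≤ C)
    (hbound : ∀ y : H →L[ℂ] H, IsCompactOperator ⇑y → ‖y‖ ≤ 1 →
      ‖u * pinch p (star u * y) - v * pinch p (star v * y)‖ ≤ C) :
    Summable (fun i =>
      (u * extFam p0 p i * star u - v * extFam p0 p i * star v) * extFam p0 p i) ∧
    ‖∑' i, (u * extFam p0 p i * star u - v * extFam p0 p i * star v) * extFam p0 p i‖
      ≤ 3 * C := by
  classical
  set q : ℕ → H →L[ℂ] H := extFam p0 p with hqdef
  have hp : FamOrtho p := ⟨hsa, hidem, horth⟩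
  have hpip0 : ∀ i, p i * p0 = 0 := by
    intro i
    ext ξ
    have h1 : p0 (p0 ξ) = p0 ξ := by
      rw [← ContinuousLinearMap.mul_apply, hp0idem]
    have h2 := (hp0fix (p0 ξ)).mp h1 i
    simpa using h2
  have hp0pi : ∀ i, p0 * p i = 0 := by
    intro i
    have h := congrArg star (hpip0 i)
    rwa [star_mul, (hsa i).star_eq, hp0sa.star_eq, star_zero] at h
  have hq : FamOrtho q := by
    refine ⟨?_, ?_, ?_⟩
    · intro i; cases i with
      | zero => exact hp0sa
      | succ n => exact hsa n
    · intro i; cases i with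
      | zero => exact hp0idem
      | succ n => exact hidem n
    · intro i j hij
      match i, j with
      | 0, 0 => exact (hij rfl).elim
      | 0, (n+1) => exact hp0pi n
      | (m+1), 0 => exact hpip0 m
      | (m+1), (n+1) => exact horth m n (fun h => hij (by rw [h]))
  -- compact operators
  have hkcpt : IsCompactOperator ⇑(u - v) := by
    have h1 : u - v = (u - 1) - (v - 1) := by abel
    have h2 := hucpt.sub hvcpt
    rw [h1, ContinuousLinearMap.coe_sub']
    exact h2
  have hstarcomp : ∀ w : H →L[ℂ] H, star w * w = 1 → IsCompactOperator ⇑(w - 1) →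
      IsCompactOperator ⇑(star w - 1) := by
    intro w hw1 hwc
    have h1 : star w - 1 = star w * (1 - w) := by
      rw [mul_sub, mul_one, hw1]
    have h2 : (1 : H →L[ℂ] H) - w = -(w - 1) := by abel
    have h3 : IsCompactOperator ⇑((1 : H →L[ℂ] H) - w) := by
      rw [h2]
      exact (hwc.neg : IsCompactOperator (-⇑(w - 1)))
    have h4 := h3.continuous_comp (star w).continuous
    rw [h1]
    have h5 : ⇑(star w * (1 - w)) = ⇑(star w) ∘ ⇑(1 - w) := rfl
    rw [h5]
    exact h4
  have hkscpt : IsCompactOperator ⇑(star u - star v) := by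
    have h1 : star u - star v = (star u - 1) - (star v - 1) := by abel
    have h2 := (hstarcomp u hu1 hucpt).sub (hstarcomp v hv1 hvcpt)
    rw [h1, ContinuousLinearMap.coe_sub']
    exact h2
  have hunorm : ‖u‖ ≤ 1 := ContinuousLinearMap.opNorm_le_bound u zero_le_one
    (fun x => by rw [isometry_of_star_mul_self u hu1, one_mul])
  have hvnorm : ‖v‖ ≤ 1 := ContinuousLinearMap.opNorm_le_bound v zero_le_one
    (fun x => by rw [isometry_of_star_mul_self v hv1, one_mul])
  have husnorm : ‖star u‖ ≤ 1 := by rw [norm_star]; exact hunorm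
  -- Part (a) : summability
  have hsummable : Summable (fun i => (u * q i * star u - v * q i * star v) * q i) := by
    rw [summable_iff_vanishing]
    intro e he
    obtain ⟨ε, hε, hball⟩ := Metric.mem_nhds_iff.mp he
    obtain ⟨s1, hs1⟩ := fam_tail_small q hq (star u - star v) hkscpt
      (show (0:ℝ) < ε/3 by linarith)
    obtain ⟨s2, hs2⟩ := fam_tail_small q hq (u - v) hkcpt (show (0:ℝ) < ε/3 by linarith)
    refine ⟨s1 ∪ s2, fun t ht => ?_⟩
    have ht1 : Disjoint t s1 := ht.mono_right Finset.subset_union_left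
    have ht2 : Disjoint t s2 := ht.mono_right Finset.subset_union_right
    set Qt : H →L[ℂ] H := ∑ i ∈ t, q i with hQt
    have hQtq : ∀ i ∈ t, Qt * q i = q i := by
      intro i hi
      rw [hQt, Finset.sum_mul]
      rw [Finset.sum_eq_single i (fun j hj hne => hq.2.2 j i hne) (fun h => (h hi).elim)]
      exact hq.2.1 i
    have hQtsa : star Qt = Qt := fam_sum_sa q hq t
    -- tail norms of the two compacts
    have hn1 : ‖Qt * (star u - star v)‖ ≤ ε/3 := by
      refine ContinuousLinearMap.opNorm_le_bound _ (by linarith) (fun ξ => ?_)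
      have hx : (Qt * (star u - star v)) ξ = ∑ i ∈ t, q i ((star u - star v) ξ) := by
        rw [ContinuousLinearMap.mul_apply, hQt, ContinuousLinearMap.sum_apply]
      rw [hx]
      exact hs1 t ht1 ξ
    have hn2 : ‖Qt * (u - v)‖ ≤ ε/3 := by
      refine ContinuousLinearMap.opNorm_le_bound _ (by linarith) (fun ξ => ?_)
      have hx : (Qt * (u - v)) ξ = ∑ i ∈ t, q i ((u - v) ξ) := by
        rw [ContinuousLinearMap.mul_apply, hQt, ContinuousLinearMap.sum_apply]
      rw [hx]
      exact hs2 t ht2 ξ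
    have hn1' : ‖(u - v) * Qt‖ ≤ ε/3 := by
      rw [← norm_star]
      rw [star_mul, hQtsa]
      have : star (u - v) = star u - star v := by rw [star_sub]
      rw [this]
      exact hn1
    have hn2' : ‖(star u - star v) * Qt‖ ≤ ε/3 := by
      rw [← norm_star]
      rw [star_mul, hQtsa]
      have : star (star u - star v) = u - v := by rw [star_sub, star_star, star_star]
      rw [this]
      exact hn2
    -- algebraic decomposition of the partial sum
    have hQtW1 : Qt * (∑ i ∈ t, q i * star u * q i) = ∑ i ∈ t, q i * star u * q i := by
      rw [Finset.mul_sum]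
      refine Finset.sum_congr rfl (fun i hi => ?_)
      calc Qt * (q i * star u * q i) = (Qt * q i) * (star u * q i) := by
            simp only [mul_assoc]
        _ = q i * star u * q i := by rw [hQtq i hi]; simp only [mul_assoc]
    have hW2eq : ∑ i ∈ t, q i * ((star u - star v) * Qt) * q i
        = ∑ i ∈ t, q i * (star u - star v) * q i := by
      refine Finset.sum_congr rfl (fun i hi => ?_)
      calc q i * ((star u - star v) * Qt) * q i
          = q i * (star u - star v) * (Qt * q i) := by simp only [mul_assoc]
        _ = q i * (star u - star v) * q i := by rw [hQtq i hi]
    have hdecomp : ∑ i ∈ t, (u * q i * star u - v * q i * star v) * q i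
        = ((u - v) * Qt) * (∑ i ∈ t, q i * star u * q i)
          + v * (∑ i ∈ t, q i * ((star u - star v) * Qt) * q i) := by
      have hstep1 : ∑ i ∈ t, (u * q i * star u - v * q i * star v) * q i
          = ∑ i ∈ t, ((u - v) * (q i * star u * q i) + v * (q i * (star u - star v) * q i)) := by
        refine Finset.sum_congr rfl (fun i _ => ?_)
        noncomm_ring
      have hstep2 : ((u - v) * Qt) * (∑ i ∈ t, q i * star u * q i)
          = ∑ i ∈ t, (u - v) * (q i * star u * q i) := by
        rw [mul_assoc, hQtW1, Finset.mul_sum]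
      have hstep3 : v * (∑ i ∈ t, q i * ((star u - star v) * Qt) * q i)
          = ∑ i ∈ t, v * (q i * (star u - star v) * q i) := by
        rw [hW2eq, Finset.mul_sum]
      rw [hstep1, hstep2, hstep3, ← Finset.sum_add_distrib]
    rw [hdecomp]
    have hW1 : ‖∑ i ∈ t, q i * star u * q i‖ ≤ 1 :=
      le_trans (fam_pinch_contr q hq (star u) t) husnorm
    have hb1 : ‖((u - v) * Qt) * (∑ i ∈ t, q i * star u * q i)‖ ≤ ε/3 := by
      calc ‖((u - v) * Qt) * (∑ i ∈ t, q i * star u * q i)‖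
          ≤ ‖(u - v) * Qt‖ * ‖∑ i ∈ t, q i * star u * q i‖ := norm_mul_le _ _
        _ ≤ (ε/3) * 1 := mul_le_mul hn1' hW1 (norm_nonneg _) (by linarith)
        _ = ε/3 := by ring
    have hb2 : ‖v * (∑ i ∈ t, q i * ((star u - star v) * Qt) * q i)‖ ≤ ε/3 := by
      calc ‖v * (∑ i ∈ t, q i * ((star u - star v) * Qt) * q i)‖
          ≤ ‖v‖ * ‖∑ i ∈ t, q i * ((star u - star v) * Qt) * q i‖ := norm_mul_le _ _
        _ ≤ 1 * (ε/3) := by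
            apply mul_le_mul hvnorm (le_trans (fam_pinch_contr q hq _ t) hn2')
              (norm_nonneg _) zero_le_one
        _ = ε/3 := by ring
    apply hball
    rw [Metric.mem_ball, dist_zero_right]
    calc ‖((u - v) * Qt) * (∑ i ∈ t, q i * star u * q i)
          + v * (∑ i ∈ t, q i * ((star u - star v) * Qt) * q i)‖
        ≤ ‖((u - v) * Qt) * (∑ i ∈ t, q i * star u * q i)‖
          + ‖v * (∑ i ∈ t, q i * ((star u - star v) * Qt) * q i)‖ := norm_add_le _ _
      _ ≤ ε/3 + ε/3 := add_le_add hb1 hb2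
      _ < ε := by linarith
  refine ⟨hsummable, ?_⟩
  -- Part (b)
  set D : ℕ → H →L[ℂ] H := fun i => u * p i * star u - v * p i * star v with hD
  set E : ℕ → H →L[ℂ] H := fun i => u * p i * star u with hE
  set F : ℕ → H →L[ℂ] H := fun i => v * p i * star v with hF
  have hEidem : ∀ i, E i * E i = E i := by
    intro i
    calc E i * E i = (u * p i) * ((star u * u) * (p i * star u)) := by
          simp only [hE, mul_assoc]
      _ = (u * p i) * (1 * (p i * star u)) := by rw [hu1]
      _ = u * (p i * p i) * star u := by simp only [one_mul, mul_assoc]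
      _ = E i := by rw [hidem i]
  have hFidem : ∀ i, F i * F i = F i := by
    intro i
    calc F i * F i = (v * p i) * ((star v * v) * (p i * star v)) := by
          simp only [hF, mul_assoc]
      _ = (v * p i) * (1 * (p i * star v)) := by rw [hv1]
      _ = v * (p i * p i) * star v := by simp only [one_mul, mul_assoc]
      _ = F i := by rw [hidem i]
  have hDsa : ∀ i, star (D i) = D i := by
    intro i
    simp only [hD, star_sub, star_mul, star_star, (hsa i).star_eq, mul_assoc]
  have hFsa : ∀ i, star (F i) = F i := by
    intro i
    simp only [hF, star_mul, star_star, (hsa i).star_eq, mul_assoc]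
  have hgen : ∀ e f : H →L[ℂ] H, (e - f) * e + f * (e - f) = e * e - f * f := by
    intro e f
    noncomm_ring
  have hDEF : ∀ i, D i = E i - F i := fun i => rfl
  have hmagic : ∀ i, D i = D i * E i + F i * D i := by
    intro i
    rw [hDEF i, hgen (E i) (F i), hEidem i, hFidem i]
  -- the three budget bounds
  have hbud1 : ∀ s : Finset ℕ, ‖∑ i ∈ s, D i * p i‖ ≤ C := by
    intro s
    have h := budget p hp u v 1 (by simp) C hC hbound s
    have heq : ∀ i, (u * p i * star u - v * p i * star v) * ((1:H →L[ℂ] H) * p i * star 1)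
        = D i * p i := by
      intro i
      simp [hD]
    rw [Finset.sum_congr rfl (fun i _ => heq i)] at h
    exact h
  have hbudE : ∀ s : Finset ℕ, ‖∑ i ∈ s, D i * E i‖ ≤ C := by
    intro s
    exact budget p hp u v u hu1 C hC hbound s
  have hbudF : ∀ s : Finset ℕ, ‖∑ i ∈ s, D i * F i‖ ≤ C := by
    intro s
    exact budget p hp u v v hv1 C hC hbound s
  have hD2C : ∀ s : Finset ℕ, ‖∑ i ∈ s, D i‖ ≤ 2 * C := by
    intro s
    have hsplit : ∑ i ∈ s, D i = (∑ i ∈ s, D i * E i) + ∑ i ∈ s, F i * D i := by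
      rw [← Finset.sum_add_distrib]
      exact Finset.sum_congr rfl (fun i _ => hmagic i)
    have hstar : ‖∑ i ∈ s, F i * D i‖ = ‖∑ i ∈ s, D i * F i‖ := by
      rw [← norm_star (∑ i ∈ s, D i * F i), star_sum]
      congr 1
      refine Finset.sum_congr rfl (fun i _ => ?_)
      rw [star_mul, hDsa i, hFsa i]
    calc ‖∑ i ∈ s, D i‖ = ‖(∑ i ∈ s, D i * E i) + ∑ i ∈ s, F i * D i‖ := by rw [hsplit]
      _ ≤ ‖∑ i ∈ s, D i * E i‖ + ‖∑ i ∈ s, F i * D i‖ := norm_add_le _ _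
      _ ≤ C + C := by
          rw [hstar]
          exact add_le_add (hbudE s) (hbudF s)
      _ = 2 * C := by ring
  -- completeness of the extended family
  have hCF : ∀ w : H, HasSum (fun i => q i w) w := by
    intro w
    have hsumv : Summable (fun i => q i w) := by
      rw [summable_iff_vanishing]
      intro e he
      obtain ⟨ε, hε, hball⟩ := Metric.mem_nhds_iff.mp he
      have hsq := fam_sq_summable q hq w
      obtain ⟨s, hs⟩ := hsq.vanishing (Iio_mem_nhds (show (0:ℝ) < ε^2 by positivity))
      refine ⟨s, fun t ht => ?_⟩
      have h1 := hs t ht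
      have h2 : ‖∑ i ∈ t, q i w‖ ^ 2 < ε ^ 2 := by
        rw [fam_norm_sum_sq q hq]
        exact h1
      apply hball
      rw [Metric.mem_ball, dist_zero_right]
      nlinarith [norm_nonneg (∑ i ∈ t, q i w)]
    set w' := ∑' i, q i w with hw'
    have hw'sum : HasSum (fun i => q i w) w' := hsumv.hasSum
    have hqj : ∀ j, q j w' = q j w := by
      intro j
      rw [hw', (q j).map_tsum hsumv]
      rw [tsum_eq_single j (fun i hij => by
        have h1 : q j (q i w) = (q j * q i) w := rfl
        rw [h1, hq.2.2 j i (Ne.symm hij)]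
        rfl)]
      have h2 : q j (q j w) = (q j * q j) w := rfl
      rw [h2, hq.2.1 j]
    have hδp : ∀ i, p i (w - w') = 0 := by
      intro i
      have h3 := hqj (i + 1)
      have h4 : q (i+1) = p i := rfl
      rw [h4] at h3
      rw [map_sub, h3, sub_self]
    have hδ0 : p0 (w - w') = 0 := by
      have h3 := hqj 0
      have h4 : q 0 = p0 := rfl
      rw [h4] at h3
      rw [map_sub, h3, sub_self]
    have hfix := (hp0fix (w - w')).mpr hδp
    have : w - w' = 0 := by rw [← hfix, hδ0]
    have hww : w' = w := by
      have := sub_eq_zero.mp this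
      exact this.symm
    rwa [hww] at hw'sum
  -- pointwise bound on the central block
  have hblock : ∀ ξ : H, ‖((u * p0 * star u - v * p0 * star v) * p0) ξ‖ ≤ 2 * C * ‖ξ‖ := by
    intro ξ
    set ξ0 : H := p0 ξ with hξ0
    have hξ0norm : ‖ξ0‖ ≤ ‖ξ‖ := sa_idem_contraction p0 hp0sa hp0idem ξ
    -- two completeness expansions
    have hu' : HasSum (fun i => u (q i ((star u) ξ0))) ξ0 := by
      have h1 := (hCF ((star u) ξ0)).mapL u
      have h2 : u ((star u) ξ0) = ξ0 := by
        rw [← ContinuousLinearMap.mul_apply, hu2, ContinuousLinearMap.one_apply]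
      rwa [h2] at h1
    have hv' : HasSum (fun i => v (q i ((star v) ξ0))) ξ0 := by
      have h1 := (hCF ((star v) ξ0)).mapL v
      have h2 : v ((star v) ξ0) = ξ0 := by
        rw [← ContinuousLinearMap.mul_apply, hv2, ContinuousLinearMap.one_apply]
      rwa [h2] at h1
    set G : ℕ → H := fun i => u (q i ((star u) ξ0)) - v (q i ((star v) ξ0)) with hG
    have hG0 : HasSum G 0 := by
      have := hu'.sub hv'
      rwa [sub_self] at this
    have hGshift : HasSum (fun n => G (n + 1)) (-(G 0)) := by
      rw [hasSum_nat_add_iff 1]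
      have h1 : ∑ i ∈ Finset.range 1, G i = G 0 := by simp
      rw [h1, neg_add_cancel]
      exact hG0
    have hGD : ∀ n, G (n + 1) = (D n) ξ0 := by
      intro n
      have h4 : q (n+1) = p n := rfl
      simp only [hG, hD, h4, ContinuousLinearMap.sub_apply, ContinuousLinearMap.mul_apply]
    have hGD' : HasSum (fun n => (D n) ξ0) (-(G 0)) := by
      have := hGshift
      simpa only [hGD] using this
    -- partial sums bounded by 2C‖ξ0‖, hence the limit too
    have hbound0 : ‖G 0‖ ≤ 2 * C * ‖ξ0‖ := by
      have hnegb : ‖-(G 0)‖ ≤ 2 * C * ‖ξ0‖ := by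
        have htend := hGD'.tendsto_sum_nat
        -- use the finset net instead
        have htnet : Filter.Tendsto (fun s : Finset ℕ => ∑ i ∈ s, (D i) ξ0)
            Filter.atTop (nhds (-(G 0))) := hGD'
        have hnorm : Filter.Tendsto (fun s : Finset ℕ => ‖∑ i ∈ s, (D i) ξ0‖)
            Filter.atTop (nhds ‖-(G 0)‖) := htnet.norm
        refine le_of_tendsto hnorm (Filter.Eventually.of_forall (fun s => ?_))
        have h5 : ∑ i ∈ s, (D i) ξ0 = (∑ i ∈ s, D i) ξ0 := by
          rw [ContinuousLinearMap.sum_apply]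
        rw [h5]
        calc ‖(∑ i ∈ s, D i) ξ0‖ ≤ ‖∑ i ∈ s, D i‖ * ‖ξ0‖ := ContinuousLinearMap.le_opNorm _ _
          _ ≤ 2 * C * ‖ξ0‖ := mul_le_mul_of_nonneg_right (hD2C s) (norm_nonneg ξ0)
      rwa [norm_neg] at hnegb
    have hblockeq : ((u * p0 * star u - v * p0 * star v) * p0) ξ = G 0 := by
      have h4 : q 0 = p0 := rfl
      simp only [hG, h4, ContinuousLinearMap.mul_apply, ContinuousLinearMap.sub_apply, hξ0]
    rw [hblockeq]
    calc ‖G 0‖ ≤ 2 * C * ‖ξ0‖ := hbound0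
      _ ≤ 2 * C * ‖ξ‖ := by
          apply mul_le_mul_of_nonneg_left hξ0norm (by linarith)
  -- final assembly
  set x : ℕ → H →L[ℂ] H := fun i => (u * q i * star u - v * q i * star v) * q i with hx
  have hgoal : ‖∑' i, x i‖ ≤ 3 * C := by
    refine ContinuousLinearMap.opNorm_le_bound _ (by linarith) (fun ξ => ?_)
    have heval : (∑' i, x i) ξ = ∑' i, x i ξ :=
      (ContinuousLinearMap.apply ℂ H ξ).map_tsum hsummable
    have hvsum : Summable (fun i => x i ξ) := by
      have := hsummable.hasSum.mapL (ContinuousLinearMap.apply ℂ H ξ)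
      exact this.summable
    have hsplit : ∑' i, x i ξ = x 0 ξ + ∑' i, x (i+1) ξ := Summable.tsum_eq_zero_add hvsum
    have htail : ‖∑' i, x (i+1) ξ‖ ≤ C * ‖ξ‖ := by
      have hvsum' : Summable (fun i => x (i+1) ξ) := by
        have := (summable_nat_add_iff 1).mpr hvsum
        exact this
      have hhs := hvsum'.hasSum
      have hnorm : Filter.Tendsto (fun s : Finset ℕ => ‖∑ i ∈ s, x (i+1) ξ‖)
          Filter.atTop (nhds ‖∑' i, x (i+1) ξ‖) := hhs.norm
      refine le_of_tendsto hnorm (Filter.Eventually.of_forall (fun s => ?_))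
      have hxi : ∀ i, x (i+1) = D i * p i := by
        intro i
        have h4 : q (i+1) = p i := rfl
        simp only [hx, hD, h4]
      have h5 : ∑ i ∈ s, x (i+1) ξ = (∑ i ∈ s, D i * p i) ξ := by
        rw [ContinuousLinearMap.sum_apply]
        exact Finset.sum_congr rfl (fun i _ => by rw [hxi i])
      rw [h5]
      calc ‖(∑ i ∈ s, D i * p i) ξ‖ ≤ ‖∑ i ∈ s, D i * p i‖ * ‖ξ‖ :=
            ContinuousLinearMap.le_opNorm _ _
        _ ≤ C * ‖ξ‖ := mul_le_mul_of_nonneg_right (hbud1 s) (norm_nonneg ξ)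
    have hhead : ‖x 0 ξ‖ ≤ 2 * C * ‖ξ‖ := by
      have h4 : q 0 = p0 := rfl
      have h5 : x 0 = (u * p0 * star u - v * p0 * star v) * p0 := by
        simp only [hx, h4]
      rw [h5]
      exact hblock ξ
    rw [heval, hsplit]
    calc ‖x 0 ξ + ∑' i, x (i+1) ξ‖ ≤ ‖x 0 ξ‖ + ‖∑' i, x (i+1) ξ‖ := norm_add_le _ _
      _ ≤ 2 * C * ‖ξ‖ + C * ‖ξ‖ := add_le_add hhead htail
      _ = 3 * C * ‖ξ‖ := by ring
  exact hgoal
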